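/- arXiv:1008.0425 — 3 statements merged into one kernel-verified Lean document; each statement's English description precedes it below -/
import Mathlib

section
/- There is no six-qubit CSS stabilizer code encoding one logical qubit that corrects an arbitrary single-qubit error; i.e., there is no set of five independent commuting generators on 6 qubits, each a tensor product of only X and I operators or only Z and I operators, such that every pair of distinct single-qubit Pauli errors either anticommutes with some generator or their product lies in the stabilizer group. -/
/-- An `n`-qubit Pauli operator (up to phase), represented by its Z-part and
X-part vectors over `F₂`. -/
abbrev PauliVec (n : ℕ) := (Fin n → ZMod 2) × (Fin n → ZMod 2)

/-- The symplectic form on `(F₂)^{2n}`: two Pauli operators commute iff this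
vanishes, and anticommute iff it equals `1`. -/
def symp {n : ℕ} (a b : PauliVec n) : ZMod 2 :=
  ∑ i, (a.1 i * b.2 i + a.2 i * b.1 i)

/-- A CSS generator consists of only `X` and `I` factors or only `Z` and `I`
factors: its Z-part or its X-part vanishes. -/
def IsCSS {n : ℕ} (g : PauliVec n) : Prop := g.1 = 0 ∨ g.2 = 0

/-- A Pauli operator of weight at most one: supported on (at most) a single
qubit. -/
def IsAtMostSingleQubit {n : ℕ} (e : PauliVec n) : Prop :=
  ∃ i : Fin n, ∀ j : Fin n, j ≠ i → e.1 j = 0 ∧ e.2 j = 0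


section CSSAux
open Finset Module Submodule


private lemma zmod2_add_self (x : Fin 6 → ZMod 2) : x + x = 0 := by
  rw [← two_smul (ZMod 2) x, show (2 : ZMod 2) = 0 by decide, zero_smul]

private lemma zmod2_sub_eq_add (a b : Fin 6 → ZMod 2) : a - b = a + b := by
  rw [sub_eq_add_neg, neg_eq_of_add_eq_zero_left (zmod2_add_self b)]

private lemma quot_bound {α : Type} [DecidableEq α] (f : Fin 6 → α)
    (U : Submodule (ZMod 2) (Fin 6 → ZMod 2))
    (h : ∀ i j, f i = f j → Pi.single i 1 + Pi.single j 1 ∈ U) :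
    6 ≤ finrank (ZMod 2) U + (Finset.univ.image f).card := by
  classical
  set q := U.mkQ with hq
  have hsingle : ∀ i j : Fin 6, f i = f j → q (Pi.single i 1) = q (Pi.single j 1) := by
    intro i j hf
    rw [hq, Submodule.mkQ_apply, Submodule.mkQ_apply, Submodule.Quotient.eq,
      zmod2_sub_eq_add]
    exact h i j hf
  let h' : α → ((Fin 6 → ZMod 2) ⧸ U) :=
    fun v => if hx : ∃ i, f i = v then q (Pi.single hx.choose 1) else 0
  have hfac : ∀ i, q (Pi.single i 1) = h' (f i) := by
    intro i
    have hx : ∃ i', f i' = f i := ⟨i, rfl⟩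
    simp only [h', dif_pos hx]
    exact hsingle i hx.choose hx.choose_spec.symm
  set s : Finset ((Fin 6 → ZMod 2) ⧸ U) := (Finset.univ.image f).image h' with hs
  have hspan : span (ZMod 2) (s : Set ((Fin 6 → ZMod 2) ⧸ U)) = ⊤ := by
    rw [eq_top_iff]
    rintro x -
    obtain ⟨y, rfl⟩ := U.mkQ_surjective x
    have hy : y = ∑ i, Pi.single i (y i) := (Finset.univ_sum_single y).symm
    rw [hy, map_sum]
    apply Submodule.sum_mem
    intro i _
    have h1 : (Pi.single i (y i) : Fin 6 → ZMod 2) = y i • Pi.single i 1 := by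
      funext m
      simp [Pi.single_apply, mul_ite]
    rw [h1, map_smul]
    apply Submodule.smul_mem
    apply Submodule.subset_span
    rw [show U.mkQ = q from rfl, hfac i]
    exact Finset.mem_coe.mpr (Finset.mem_image_of_mem h'
      (Finset.mem_image_of_mem f (Finset.mem_univ i)))
  have h2 : finrank (ZMod 2) ((Fin 6 → ZMod 2) ⧸ U) ≤ s.card := by
    calc finrank (ZMod 2) ((Fin 6 → ZMod 2) ⧸ U)
        = finrank (ZMod 2) (⊤ : Submodule (ZMod 2) ((Fin 6 → ZMod 2) ⧸ U)) :=
          (finrank_top _ _).symm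
      _ = finrank (ZMod 2) (span (ZMod 2) (s : Set ((Fin 6 → ZMod 2) ⧸ U))) := by
          rw [hspan]
      _ ≤ s.card := finrank_span_finset_le_card s
  have h3 := Submodule.finrank_quotient_add_finrank U
  have h4 : finrank (ZMod 2) (Fin 6 → ZMod 2) = 6 := by simp
  have h5 : s.card ≤ (Finset.univ.image f).card := Finset.card_image_le
  omega

private lemma rank_bound (A : Fin 5 → Fin 6 → ZMod 2) (K : Finset (Fin 5))
    (h0 : ∀ k, k ∉ K → A k = 0) :
    finrank (ZMod 2) (span (ZMod 2) (Set.range A)) ≤ K.card := by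
  classical
  have hle : span (ZMod 2) (Set.range A) ≤
      span (ZMod 2) ((K.image A : Finset (Fin 6 → ZMod 2)) : Set (Fin 6 → ZMod 2)) := by
    rw [Submodule.span_le]
    rintro _ ⟨k, rfl⟩
    by_cases hk : k ∈ K
    · exact Submodule.subset_span (by simpa using Finset.mem_image_of_mem A hk)
    · rw [h0 k hk]; exact Submodule.zero_mem _
  calc finrank (ZMod 2) (span (ZMod 2) (Set.range A))
      ≤ finrank (ZMod 2) (span (ZMod 2) ((K.image A : Finset (Fin 6 → ZMod 2)) :
          Set (Fin 6 → ZMod 2))) := Submodule.finrank_mono hle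
    _ ≤ (K.image A).card := finrank_span_finset_le_card _
    _ ≤ K.card := Finset.card_image_le

private def fiberSum (s : Finset (Fin 6)) : (Fin 6 → ZMod 2) →ₗ[ZMod 2] ZMod 2 where
  toFun z := ∑ m ∈ s, z m
  map_add' x y := by simp [Finset.sum_add_distrib]
  map_smul' c x := by simp [Finset.mul_sum]

private lemma sum_single_mem (s : Finset (Fin 6)) (i : Fin 6) :
    ∑ m ∈ s, (Pi.single i 1 : Fin 6 → ZMod 2) m = if i ∈ s then 1 else 0 := by
  simp [Pi.single_apply]

private lemma pair_zero_mem (U : Submodule (ZMod 2) (Fin 6 → ZMod 2)) (i : Fin 6) :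
    (Pi.single i 1 + Pi.single i 1 : Fin 6 → ZMod 2) ∈ U := by
  rw [zmod2_add_self]; exact U.zero_mem

private lemma css_aux (A B : Fin 5 → Fin 6 → ZMod 2) (KX KZ : Finset (Fin 5))
    (hUnion : ∀ k, k ∈ KX ∨ k ∈ KZ)
    (hdisj : Disjoint KX KZ)
    (hA0 : ∀ k ∈ KX, A k = 0)
    (hB0 : ∀ k ∈ KZ, B k = 0)
    (hBcol : ∀ i, ∃ k, B k i = 1)
    (hAcol : ∀ i, ∃ k, A k i = 1)
    (hBpair : ∀ i j, i ≠ j → (∀ k, B k i = B k j) →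
      (Pi.single i 1 + Pi.single j 1) ∈ span (ZMod 2) (Set.range A))
    (hApair : ∀ i j, i ≠ j → (∀ k, A k i = A k j) →
      (Pi.single i 1 + Pi.single j 1) ∈ span (ZMod 2) (Set.range B))
    (hKX : KX.card ≤ 2) : False := by
  classical
  set CZ := span (ZMod 2) (Set.range A) with hCZdef
  set CX := span (ZMod 2) (Set.range B) with hCXdef
  have hcards : KX.card + KZ.card ≤ 5 := by
    have h1 : (KX ∪ KZ).card ≤ 5 := le_trans (Finset.card_le_univ _) (by simp)
    rwa [Finset.card_union_of_disjoint hdisj] at h1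
  have hBnotinKZ : ∀ k i, B k i = 1 → k ∈ KX := by
    intro k i h
    rcases hUnion k with hk | hk
    · exact hk
    · rw [hB0 k hk] at h
      exact absurd h (by norm_num)
  have hrankCZ : finrank (ZMod 2) CZ ≤ KZ.card := by
    apply rank_bound
    intro k hk
    rcases hUnion k with h | h
    · exact hA0 k h
    · exact absurd h hk
  have hrankCX : finrank (ZMod 2) CX ≤ KX.card := by
    apply rank_bound
    intro k hk
    rcases hUnion k with h | h
    · exact absurd h hk
    · exact hB0 k h
  have hc012 : KX.card = 0 ∨ KX.card = 1 ∨ KX.card = 2 := by omega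
  rcases hc012 with h0 | h1 | h2
  · -- no X-type generators
    obtain ⟨k, hk⟩ := hBcol 0
    have := hBnotinKZ k 0 hk
    rw [Finset.card_eq_zero.mp h0] at this
    exact absurd this (Finset.notMem_empty k)
  · -- one X-type generator
    obtain ⟨k0, hk0⟩ := Finset.card_eq_one.mp h1
    have hB1 : ∀ i, B k0 i = 1 := by
      intro i
      obtain ⟨k, hk⟩ := hBcol i
      have hkx := hBnotinKZ k i hk
      rw [hk0, Finset.mem_singleton] at hkx
      rwa [hkx] at hk
    have hall : ∀ i j : Fin 6, (fun _ : Fin 6 => ()) i = (fun _ : Fin 6 => ()) j →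
        Pi.single i 1 + Pi.single j 1 ∈ CZ := by
      intro i j _
      by_cases hij : i = j
      · subst hij; exact pair_zero_mem CZ i
      · apply hBpair i j hij
        intro k
        rcases hUnion k with hk | hk
        · have hkk : k = k0 := by rwa [hk0, Finset.mem_singleton] at hk
          rw [hkk, hB1 i, hB1 j]
        · rw [hB0 k hk]; rfl
    have hqb := quot_bound (fun _ : Fin 6 => ()) CZ hall
    have himg : (Finset.univ.image (fun _ : Fin 6 => ())).card ≤ 1 := by
      apply le_trans (Finset.card_le_univ _)
      simp
    omega
  · -- two X-type generators
    obtain ⟨k1, k2, hk12, hKXeq⟩ := Finset.card_eq_two.mp h2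
    set f : Fin 6 → ZMod 2 × ZMod 2 := fun i => (B k1 i, B k2 i) with hfdef
    have hf0 : ∀ i, f i ≠ 0 := by
      intro i heq
      obtain ⟨k, hk⟩ := hBcol i
      have hkx := hBnotinKZ k i hk
      rw [hKXeq, Finset.mem_insert, Finset.mem_singleton] at hkx
      have h1 : B k1 i = 0 := congrArg Prod.fst heq
      have h2' : B k2 i = 0 := congrArg Prod.snd heq
      rcases hkx with rfl | rfl
      · rw [hk] at h1; exact absurd h1 (by norm_num)
      · rw [hk] at h2'; exact absurd h2' (by norm_num)
    have hsame : ∀ i j, f i = f j → ∀ k, B k i = B k j := by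
      intro i j hfij k
      rcases hUnion k with hk | hk
      · rw [hKXeq, Finset.mem_insert, Finset.mem_singleton] at hk
        rcases hk with rfl | rfl
        · exact congrArg Prod.fst hfij
        · exact congrArg Prod.snd hfij
      · rw [hB0 k hk]; rfl
    have hdiffCZ : ∀ i j, f i = f j → Pi.single i 1 + Pi.single j 1 ∈ CZ := by
      intro i j hfij
      by_cases hij : i = j
      · subst hij; exact pair_zero_mem CZ i
      · exact hBpair i j hij (hsame i j hfij)
    -- the三 values
    have himg3 : (Finset.univ.image f).card ≤ 3 := by
      have hsub : Finset.univ.image f ⊆ ({(0,1),(1,0),(1,1)} : Finset (ZMod 2 × ZMod 2)) := by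
        intro v hv
        obtain ⟨i, _, rfl⟩ := Finset.mem_image.mp hv
        have := hf0 i
        revert this
        generalize f i = w
        revert w; decide
      exact le_trans (Finset.card_le_card hsub) (by decide)
    -- D = span of in-fiber differences
    set Sd : Set (Fin 6 → ZMod 2) :=
      {z | ∃ i j, f i = f j ∧ z = Pi.single i 1 + Pi.single j 1} with hSdef
    set D := span (ZMod 2) Sd with hDdef
    have hDCZ : D ≤ CZ := by
      rw [hDdef, Submodule.span_le]
      rintro z ⟨i, j, hfij, rfl⟩
      exact hdiffCZ i j hfij
    have hqD := quot_bound f D (fun i j hfij => Submodule.subset_span ⟨i, j, hfij, rfl⟩)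
    have hKZ3 : KZ.card ≤ 3 := by omega
    have hfinD : finrank (ZMod 2) CZ ≤ finrank (ZMod 2) D := by omega
    have hCZD : D = CZ := Submodule.eq_of_le_of_finrank_le hDCZ hfinD
    have hqCZ := quot_bound f CZ hdiffCZ
    have himgeq3 : (Finset.univ.image f).card = 3 := by omega
    -- parity of every element of CZ on every fiber
    have parity : ∀ (v : ZMod 2 × ZMod 2) (z : Fin 6 → ZMod 2), z ∈ CZ →
        ∑ m ∈ Finset.univ.filter (fun m => f m = v), z m = 0 := by
      intro v z hz
      rw [← hCZD, hDdef] at hz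
      have hker : span (ZMod 2) Sd ≤
          LinearMap.ker (fiberSum (Finset.univ.filter (fun m => f m = v))) := by
        rw [Submodule.span_le]
        rintro _ ⟨i, j, hfij, rfl⟩
        rw [SetLike.mem_coe, LinearMap.mem_ker]
        show ∑ m ∈ Finset.univ.filter (fun m => f m = v),
          ((Pi.single i 1 : Fin 6 → ZMod 2) m + (Pi.single j 1 : Fin 6 → ZMod 2) m) = 0
        rw [Finset.sum_add_distrib, sum_single_mem, sum_single_mem]
        have hiff : (i ∈ Finset.univ.filter (fun m => f m = v)) ↔
            (j ∈ Finset.univ.filter (fun m => f m = v)) := by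
          simp [Finset.mem_filter, hfij]
        by_cases hi : i ∈ Finset.univ.filter (fun m => f m = v)
        · rw [if_pos hi, if_pos (hiff.mp hi)]; decide
        · rw [if_neg hi, if_neg (fun hj => hi (hiff.mpr hj))]; decide
      exact LinearMap.mem_ker.mp (hker hz)
    have hAinCZ : ∀ k, A k ∈ CZ := fun k => Submodule.subset_span ⟨k, rfl⟩
    -- every fiber has at least 2 elements
    have hfib2 : ∀ v ∈ Finset.univ.image f,
        2 ≤ (Finset.univ.filter (fun m => f m = v)).card := by
      intro v hv
      obtain ⟨i, _, rfl⟩ := Finset.mem_image.mp hv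
      by_contra hlt
      push_neg at hlt
      have hi : i ∈ Finset.univ.filter (fun m => f m = f i) := by
        simp
      have hsingleton : Finset.univ.filter (fun m => f m = f i) = {i} := by
        apply Finset.eq_singleton_iff_unique_mem.mpr
        refine ⟨hi, fun x hx => ?_⟩
        exact Finset.card_le_one.mp (by omega) x hx i hi
      obtain ⟨k, hk⟩ := hAcol i
      have := parity (f i) (A k) (hAinCZ k)
      rw [hsingleton, Finset.sum_singleton, hk] at this
      exact absurd this (by norm_num)
    -- fibers have exactly 2 elements
    obtain ⟨v1, v2, v3, h12, h13, h23, hteq⟩ := Finset.card_eq_three.mp himgeq3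
    have hsumfib : ∑ v ∈ Finset.univ.image f,
        (Finset.univ.filter (fun m => f m = v)).card = 6 := by
      have := Finset.card_eq_sum_card_fiberwise
        (f := f) (s := Finset.univ) (t := Finset.univ.image f)
        (fun x _ => Finset.mem_image_of_mem f (Finset.mem_univ x))
      simpa using this.symm
    have hfibcard : ∀ v ∈ Finset.univ.image f,
        (Finset.univ.filter (fun m => f m = v)).card = 2 := by
      have e1 : v1 ∈ Finset.univ.image f := by rw [hteq]; simp
      have e2 : v2 ∈ Finset.univ.image f := by rw [hteq]; simp
      have e3 : v3 ∈ Finset.univ.image f := by rw [hteq]; simp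
      have hexp : ∑ v ∈ Finset.univ.image f,
          (Finset.univ.filter (fun m => f m = v)).card
          = (Finset.univ.filter (fun m => f m = v1)).card
          + (Finset.univ.filter (fun m => f m = v2)).card
          + (Finset.univ.filter (fun m => f m = v3)).card := by
        rw [hteq]
        rw [Finset.sum_insert (by simp [h12, h13]),
          Finset.sum_insert (by simp [h23]), Finset.sum_singleton]
        ring
      intro v hv
      have hv' : v = v1 ∨ v = v2 ∨ v = v3 := by
        rw [hteq] at hv; simpa using hv
      have g1 := hfib2 v1 e1
      have g2 := hfib2 v2 e2
      have g3 := hfib2 v3 e3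
      rcases hv' with rfl | rfl | rfl <;> omega
    -- pairs within fibers are in CX
    have hpairCX : ∀ i j, f i = f j → Pi.single i 1 + Pi.single j 1 ∈ CX := by
      intro i j hfij
      by_cases hij : i = j
      · subst hij; exact pair_zero_mem CX i
      · apply hApair i j hij
        intro k
        have hc2 := hfibcard (f i) (Finset.mem_image_of_mem f (Finset.mem_univ i))
        obtain ⟨a, b, hab, hFv⟩ := Finset.card_eq_two.mp hc2
        have hi : i ∈ ({a, b} : Finset (Fin 6)) := by
          rw [← hFv]; simp
        have hj : j ∈ ({a, b} : Finset (Fin 6)) := by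
          rw [← hFv]; simp [hfij.symm]
        have hpar := parity (f i) (A k) (hAinCZ k)
        rw [hFv, Finset.sum_pair hab] at hpar
        have hzz : ∀ x y : ZMod 2, x + y = 0 → x = y := by decide
        simp only [Finset.mem_insert, Finset.mem_singleton] at hi hj
        rcases hi with hi | hi <;> rcases hj with hj | hj
        · exact absurd (hi.trans hj.symm) hij
        · rw [hi, hj]; exact hzz _ _ hpar
        · rw [hi, hj]; exact (hzz _ _ hpar).symm
        · exact absurd (hi.trans hj.symm) hij
    have hqCX := quot_bound f CX hpairCX
    omega

private lemma symp_z (a : PauliVec 6) (z : Fin 6 → ZMod 2) :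
    symp a (z, 0) = ∑ m, a.2 m * z m := by
  simp [symp]

private lemma symp_x (a : PauliVec 6) (x : Fin 6 → ZMod 2) :
    symp a (0, x) = ∑ m, a.1 m * x m := by
  simp [symp]

private lemma sum_mul_single (w : Fin 6 → ZMod 2) (i : Fin 6) :
    ∑ m, w m * (Pi.single i 1 : Fin 6 → ZMod 2) m = w i := by
  simp [Pi.single_apply]

private lemma singleZ (i : Fin 6) :
    IsAtMostSingleQubit ((Pi.single i 1, 0) : PauliVec 6) :=
  ⟨i, fun j hj => ⟨Pi.single_eq_of_ne hj 1, rfl⟩⟩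

private lemma singleX (i : Fin 6) :
    IsAtMostSingleQubit ((0, Pi.single i 1) : PauliVec 6) :=
  ⟨i, fun j hj => ⟨rfl, Pi.single_eq_of_ne hj 1⟩⟩

private lemma zero_single : IsAtMostSingleQubit (0 : PauliVec 6) :=
  ⟨0, fun _ _ => ⟨rfl, rfl⟩⟩

private lemma singleZ_ne_zero (i : Fin 6) :
    ((Pi.single i 1, 0) : PauliVec 6) ≠ 0 := by
  intro h
  have h2 : (Pi.single i 1 : Fin 6 → ZMod 2) i = 0 := congrFun (congrArg Prod.fst h) i
  rw [Pi.single_eq_same] at h2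
  exact one_ne_zero h2

private lemma singleX_ne_zero (i : Fin 6) :
    ((0, Pi.single i 1) : PauliVec 6) ≠ 0 := by
  intro h
  have h2 : (Pi.single i 1 : Fin 6 → ZMod 2) i = 0 := congrFun (congrArg Prod.snd h) i
  rw [Pi.single_eq_same] at h2
  exact one_ne_zero h2


end CSSAux

open Finset Module Submodule in
/-- There is no six-qubit CSS stabilizer code encoding one logical qubit
(five independent commuting CSS generators, not fixing any qubit trivially)
that corrects an arbitrary single-qubit error. -/
theorem no_six_qubit_CSS_code :
    ¬ ∃ g : Fin 5 → PauliVec 6,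
      (∀ i, IsCSS (g i)) ∧
      LinearIndependent (ZMod 2) g ∧
      (∀ i j, symp (g i) (g j) = 0) ∧
      -- nontriviality: no nonzero single-qubit Pauli lies in the stabilizer
      (∀ e : PauliVec 6, IsAtMostSingleQubit e → e ≠ 0 →
        e ∉ Submodule.span (ZMod 2) (Set.range g)) ∧
      -- correction of an arbitrary single-qubit error: every pair of distinct
      -- single-qubit Pauli errors either anticommutes with some generator or
      -- its product lies in the stabilizer group
      (∀ e₁ e₂ : PauliVec 6, IsAtMostSingleQubit e₁ → IsAtMostSingleQubit e₂ →
        e₁ ≠ e₂ →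
        (∃ i, symp (g i) (e₁ + e₂) = 1) ∨
          e₁ + e₂ ∈ Submodule.span (ZMod 2) (Set.range g)) := by
  rintro ⟨g, hCSS, hInd, hComm, hNontriv, hCorr⟩
  classical
  set A : Fin 5 → Fin 6 → ZMod 2 := fun k => (g k).1 with hA
  set B : Fin 5 → Fin 6 → ZMod 2 := fun k => (g k).2 with hB
  have hfst : ∀ e : PauliVec 6, e ∈ span (ZMod 2) (Set.range g) →
      e.1 ∈ span (ZMod 2) (Set.range A) := by
    intro e he
    have h1 := Submodule.mem_map_of_mem
      (f := LinearMap.fst (ZMod 2) (Fin 6 → ZMod 2) (Fin 6 → ZMod 2)) he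
    rw [Submodule.map_span, ← Set.range_comp] at h1
    exact h1
  have hsnd : ∀ e : PauliVec 6, e ∈ span (ZMod 2) (Set.range g) →
      e.2 ∈ span (ZMod 2) (Set.range B) := by
    intro e he
    have h1 := Submodule.mem_map_of_mem
      (f := LinearMap.snd (ZMod 2) (Fin 6 → ZMod 2) (Fin 6 → ZMod 2)) he
    rw [Submodule.map_span, ← Set.range_comp] at h1
    exact h1
  have hBcol : ∀ i, ∃ k, B k i = 1 := by
    intro i
    rcases hCorr (Pi.single i 1, 0) 0 (singleZ i) zero_single (singleZ_ne_zero i)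
      with ⟨k, hk⟩ | hmem
    · rw [add_zero, symp_z, sum_mul_single] at hk
      exact ⟨k, hk⟩
    · rw [add_zero] at hmem
      exact absurd hmem (hNontriv _ (singleZ i) (singleZ_ne_zero i))
  have hAcol : ∀ i, ∃ k, A k i = 1 := by
    intro i
    rcases hCorr (0, Pi.single i 1) 0 (singleX i) zero_single (singleX_ne_zero i)
      with ⟨k, hk⟩ | hmem
    · rw [add_zero, symp_x, sum_mul_single] at hk
      exact ⟨k, hk⟩
    · rw [add_zero] at hmem
      exact absurd hmem (hNontriv _ (singleX i) (singleX_ne_zero i))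
  have hBpair : ∀ i j, i ≠ j → (∀ k, B k i = B k j) →
      (Pi.single i 1 + Pi.single j 1) ∈ span (ZMod 2) (Set.range A) := by
    intro i j hij hBk
    have hne : ((Pi.single i 1, 0) : PauliVec 6) ≠ (Pi.single j 1, 0) := by
      intro h
      have h2 : (Pi.single i 1 : Fin 6 → ZMod 2) i = (Pi.single j 1 : Fin 6 → ZMod 2) i :=
        congrFun (congrArg Prod.fst h) i
      rw [Pi.single_eq_same, Pi.single_eq_of_ne hij] at h2
      exact one_ne_zero h2
    have hsum : ((Pi.single i 1, 0) : PauliVec 6) + (Pi.single j 1, 0)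
        = (Pi.single i 1 + Pi.single j 1, 0) := by
      rw [Prod.mk_add_mk, add_zero]
    rcases hCorr _ _ (singleZ i) (singleZ j) hne with ⟨k, hk⟩ | hmem
    · exfalso
      rw [hsum, symp_z] at hk
      have hcomp : ∑ m, (g k).2 m * (Pi.single i 1 + Pi.single j 1 : Fin 6 → ZMod 2) m
          = B k i + B k j := by
        simp only [Pi.add_apply, mul_add, Finset.sum_add_distrib, sum_mul_single]
        rfl
      rw [hcomp, hBk k] at hk
      have : (B k j + B k j : ZMod 2) = 0 := by
        have : ∀ x : ZMod 2, x + x = 0 := by decide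
        exact this _
      rw [this] at hk
      exact absurd hk (by norm_num)
    · have h3 := hfst _ hmem
      rw [hsum] at h3
      exact h3
  have hApair : ∀ i j, i ≠ j → (∀ k, A k i = A k j) →
      (Pi.single i 1 + Pi.single j 1) ∈ span (ZMod 2) (Set.range B) := by
    intro i j hij hAk
    have hne : ((0, Pi.single i 1) : PauliVec 6) ≠ (0, Pi.single j 1) := by
      intro h
      have h2 : (Pi.single i 1 : Fin 6 → ZMod 2) i = (Pi.single j 1 : Fin 6 → ZMod 2) i :=
        congrFun (congrArg Prod.snd h) i
      rw [Pi.single_eq_same, Pi.single_eq_of_ne hij] at h2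
      exact one_ne_zero h2
    have hsum : ((0, Pi.single i 1) : PauliVec 6) + (0, Pi.single j 1)
        = (0, Pi.single i 1 + Pi.single j 1) := by
      rw [Prod.mk_add_mk, add_zero]
    rcases hCorr _ _ (singleX i) (singleX j) hne with ⟨k, hk⟩ | hmem
    · exfalso
      rw [hsum, symp_x] at hk
      have hcomp : ∑ m, (g k).1 m * (Pi.single i 1 + Pi.single j 1 : Fin 6 → ZMod 2) m
          = A k i + A k j := by
        simp only [Pi.add_apply, mul_add, Finset.sum_add_distrib, sum_mul_single]
        rfl
      rw [hcomp, hAk k] at hk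
      have : (A k j + A k j : ZMod 2) = 0 := by
        have : ∀ x : ZMod 2, x + x = 0 := by decide
        exact this _
      rw [this] at hk
      exact absurd hk (by norm_num)
    · have h3 := hsnd _ hmem
      rw [hsum] at h3
      exact h3
  set KX := Finset.univ.filter (fun k => A k = 0) with hKXdef
  set KZ := Finset.univ.filter (fun k => B k = 0 ∧ A k ≠ 0) with hKZdef
  have hUnion : ∀ k, k ∈ KX ∨ k ∈ KZ := by
    intro k
    by_cases h1 : A k = 0
    · left; simp [hKXdef, h1]
    · right
      rcases hCSS k with h | h
      · exact absurd h h1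
      · simp [hKZdef, h1]
        exact h
  have hdisj : Disjoint KX KZ := by
    rw [Finset.disjoint_left]
    intro k hk1 hk2
    rw [hKXdef, Finset.mem_filter] at hk1
    rw [hKZdef, Finset.mem_filter] at hk2
    exact hk2.2.2 hk1.2
  have hA0 : ∀ k ∈ KX, A k = 0 := by
    intro k hk
    exact (Finset.mem_filter.mp hk).2
  have hB0 : ∀ k ∈ KZ, B k = 0 := by
    intro k hk
    exact (Finset.mem_filter.mp hk).2.1
  have hc : KX.card ≤ 2 ∨ KZ.card ≤ 2 := by
    have h1 : (KX ∪ KZ).card ≤ 5 := le_trans (Finset.card_le_univ _) (by simp)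
    rw [Finset.card_union_of_disjoint hdisj] at h1
    omega
  rcases hc with h | h
  · exact css_aux A B KX KZ hUnion hdisj hA0 hB0 hBcol hAcol hBpair hApair h
  · exact css_aux B A KZ KX (fun k => (hUnion k).symm) hdisj.symm hB0 hA0 hAcol
      hBcol hApair hBpair h
end

section
/- The value q = (M/N)·(2^{h(p)}/(2^{h(p)} − 1)) is the unique stationary point in q of the asymptotic rate function R(q) = q·h(M/(qN)) − q·h(p) (obtained from (1/N)log₂[C(qN,M)/C(qN,pqN)] via Stirling), where h is the binary entropy, assuming 0 < p < 1/2 and 0 < M/(qN) < 1. -/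
/-- The binary entropy `h(x) = −x log₂ x − (1−x) log₂ (1−x)`. -/
noncomputable def binEnt (x : ℝ) : ℝ :=
  -x * Real.logb 2 x - (1-x) * Real.logb 2 (1-x)

/-- `q* = (M/N)·2^{h(p)}/(2^{h(p)} − 1)` is the unique stationary point in
`q` of the asymptotic rate function `R(q) = q·h(M/(qN)) − q·h(p)`: for every
`q > 0` with `0 < M/(qN) < 1`, the derivative of `R` at `q` vanishes iff
`q = q*`. -/
theorem unique_stationary_point (N M p : ℝ) (hN : 0 < N) (hM : 0 < M)
    (hp : 0 < p) (hp2 : p < 1/2) (q : ℝ) (hq : 0 < q)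
    (hfrac : 0 < M/(q*N)) (hfrac1 : M/(q*N) < 1) :
    deriv (fun q' : ℝ => q' * binEnt (M/(q'*N)) - q' * binEnt p) q = 0 ↔
      q = (M/N) * ((2:ℝ) ^ (binEnt p) / ((2:ℝ) ^ (binEnt p) - 1)) := by
  set c := M/N with hc
  have hcpos : 0 < c := div_pos hM hN
  have hcq : c < q := by
    rw [hc, div_lt_iff₀ hN]
    have h := (div_lt_one (by positivity : (0:ℝ) < q*N)).mp hfrac1
    linarith
  have h1c : 0 < q - c := sub_pos.mpr hcq
  have hlog2 : (0:ℝ) < Real.log 2 := Real.log_pos one_lt_two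
  have hBpos : 0 < binEnt p := by
    have h1 : Real.logb 2 p < 0 := Real.logb_neg one_lt_two hp (by linarith)
    have h2 : Real.logb 2 (1-p) < 0 := Real.logb_neg one_lt_two (by linarith) (by linarith)
    unfold binEnt
    nlinarith
  -- local rewriting of the function near q
  have heq : (fun q' : ℝ => q' * binEnt (M/(q'*N)) - q' * binEnt p)
      =ᶠ[nhds q] (fun q' => (-(c * Real.log c) + q' * Real.log q'
        - (q' - c) * Real.log (q' - c)) / Real.log 2 - q' * binEnt p) := by
    filter_upwards [Ioi_mem_nhds hcq] with q' hq'
    have hq'0 : 0 < q' := lt_trans hcpos hq'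
    have h1c' : 0 < q' - c := sub_pos.mpr hq'
    have hx : M/(q'*N) = c/q' := by
      rw [hc, div_div, mul_comm]
    have hx2 : 1 - c/q' = (q'-c)/q' := by field_simp
    rw [hx]
    unfold binEnt
    rw [hx2, Real.logb, Real.logb,
      Real.log_div hcpos.ne' hq'0.ne', Real.log_div h1c'.ne' hq'0.ne']
    field_simp
    ring
  have h1 : HasDerivAt (fun q' : ℝ => q' * Real.log q') (Real.log q + 1) q :=
    Real.hasDerivAt_mul_log hq.ne'
  have h2 : HasDerivAt (fun q' : ℝ => (q' - c) * Real.log (q' - c))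
      (Real.log (q - c) + 1) q := by
    have := (Real.hasDerivAt_mul_log (x := q - c) h1c.ne').comp q
      ((hasDerivAt_id q).sub_const c)
    simpa [Function.comp_def] using this
  have hD : HasDerivAt (fun q' => (-(c * Real.log c) + q' * Real.log q'
      - (q' - c) * Real.log (q' - c)) / Real.log 2 - q' * binEnt p)
      ((Real.log q - Real.log (q - c)) / Real.log 2 - binEnt p) q := by
    have h3 := (((h1.const_add (-(c * Real.log c))).sub h2).div_const (Real.log 2)).sub
      ((hasDerivAt_id q).mul_const (binEnt p))
    convert h3 using 1
    · rfl
    · rfl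
    · rfl
    · ring
  rw [heq.deriv_eq, hD.deriv]
  set E := (2:ℝ) ^ (binEnt p) with hE
  have hE1 : 1 < E := by
    rw [hE]
    exact (Real.one_lt_rpow_iff_of_pos (by norm_num)).mpr (Or.inl ⟨one_lt_two, hBpos⟩)
  have hlogE : Real.log E = binEnt p * Real.log 2 := Real.log_rpow (by norm_num) _
  constructor
  · intro h
    have hsub : Real.log q - Real.log (q - c) = binEnt p * Real.log 2 := by
      field_simp at h
      linarith
    have hlogdiv : Real.log (q/(q-c)) = Real.log E := by
      rw [Real.log_div hq.ne' h1c.ne', hlogE, hsub]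
    have hdiv : q/(q-c) = E := by
      have h0 : (0:ℝ) < q/(q-c) := div_pos hq h1c
      have h0' : (0:ℝ) < E := lt_trans one_pos hE1
      have := congrArg Real.exp hlogdiv
      rwa [Real.exp_log h0, Real.exp_log h0'] at this
    rw [div_eq_iff h1c.ne'] at hdiv
    have hE0 : E - 1 ≠ 0 := by intro h0; rw [sub_eq_zero] at h0; exact absurd h0.symm hE1.ne
    field_simp [hE0]
    nlinarith [hdiv]
  · intro h
    have hE0 : E - 1 ≠ 0 := by intro h0; rw [sub_eq_zero] at h0; exact absurd h0.symm hE1.ne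
    have hqc : q - c = c/(E-1) := by
      rw [h]; field_simp; ring
    have hdiv : q/(q-c) = E := by
      rw [hqc, h]
      field_simp
    have hsub : Real.log q - Real.log (q - c) = binEnt p * Real.log 2 := by
      rw [← Real.log_div hq.ne' h1c.ne', hdiv, hlogE]
    rw [hsub]
    field_simp
    ring
end

section
/- As p → 0+, the syndrome-class rate R(p,δp) = −(δp/(1−2p)) log₂(2^{h(p)} − 1) exceeds the location-encoding rate R₁(p,δp) = 2δp(1−h(p))/(1−2p), and as p → 1/2−, R(p,δp)/R₁(p,δp) → 1 (both rates tend to 0). -/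
open Filter

open Real Set Topology

lemma binEnt_eq (x : ℝ) : binEnt x = Real.binEntropy x / Real.log 2 := by
  simp only [binEnt, Real.binEntropy, Real.logb, Real.log_inv]
  ring

lemma binEnt_continuous : Continuous binEnt := by
  have : binEnt = fun x => Real.binEntropy x / Real.log 2 := funext binEnt_eq
  rw [this]
  exact Real.binEntropy_continuous.div_const _

lemma binEnt_zero : binEnt 0 = 0 := by simp [binEnt]

lemma binEnt_half : binEnt (1/2) = 1 := by
  rw [binEnt_eq, one_div, Real.binEntropy_two_inv, div_self (Real.log_pos one_lt_two).ne']

lemma binEnt_mem {p : ℝ} (h0 : 0 < p) (h1 : p < 1) (hhalf : p ≠ 2⁻¹) :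
    binEnt p ∈ Ioo (0:ℝ) 1 := by
  have hl2 : (0:ℝ) < Real.log 2 := Real.log_pos one_lt_two
  constructor
  · rw [binEnt_eq]
    exact div_pos (Real.binEntropy_pos h0 h1) hl2
  · rw [binEnt_eq, div_lt_one hl2]
    exact Real.binEntropy_lt_log_two.mpr hhalf

lemma tendsto_binEnt_zero : Tendsto binEnt (𝓝[>] (0:ℝ)) (𝓝[Ioo (0:ℝ) 1] 0) := by
  rw [tendsto_nhdsWithin_iff]
  refine ⟨?_, ?_⟩
  · have := (binEnt_continuous.tendsto 0).mono_left (nhdsWithin_le_nhds (s := Ioi (0:ℝ)))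
    rwa [binEnt_zero] at this
  · filter_upwards [Ioo_mem_nhdsGT (by norm_num : (0:ℝ) < 2⁻¹)] with p hp
    exact binEnt_mem hp.1 (hp.2.trans (by norm_num)) hp.2.ne

lemma tendsto_binEnt_half : Tendsto binEnt (𝓝[<] ((1:ℝ)/2)) (𝓝[Ioo (0:ℝ) 1] 1) := by
  rw [tendsto_nhdsWithin_iff]
  refine ⟨?_, ?_⟩
  · have := (binEnt_continuous.tendsto (1/2)).mono_left
      (nhdsWithin_le_nhds (s := Iio ((1:ℝ)/2)))
    rwa [binEnt_half] at this
  · filter_upwards [Ioo_mem_nhdsLT (by norm_num : (0:ℝ) < 1/2)] with p hp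
    exact binEnt_mem hp.1 (hp.2.trans (by norm_num)) (by rw [← one_div]; exact hp.2.ne)

/-- The auxiliary ratio function. -/
noncomputable def gfun (t : ℝ) : ℝ :=
  (-(Real.logb 2 ((2:ℝ) ^ t - 1))) / (2 * (1 - t))

lemma gfun_atTop : Tendsto gfun (𝓝[Ioo (0:ℝ) 1] 0) atTop := by
  have hX : Tendsto (fun t : ℝ => (2:ℝ) ^ t - 1) (𝓝[Ioo (0:ℝ) 1] 0) (𝓝[>] 0) := by
    rw [tendsto_nhdsWithin_iff]
    refine ⟨?_, ?_⟩
    · have hc : ContinuousAt (fun t : ℝ => (2:ℝ) ^ t - 1) 0 :=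
        (Real.continuousAt_const_rpow (two_ne_zero)).sub continuousAt_const
      have := hc.tendsto.mono_left (nhdsWithin_le_nhds (s := Ioo (0:ℝ) 1))
      simpa using this
    · filter_upwards [self_mem_nhdsWithin] with t ht
      have : (1:ℝ) < 2 ^ t :=
        (Real.one_lt_rpow_iff_of_pos two_pos).mpr (Or.inl ⟨one_lt_two, ht.1⟩)
      simpa [Set.mem_Ioi] using sub_pos.mpr this
  have hlogb : Tendsto (fun y : ℝ => Real.logb 2 y) (𝓝[>] (0:ℝ)) atBot := by
    simp only [Real.logb]
    exact (tendsto_div_const_atBot_of_pos (Real.log_pos one_lt_two)).mpr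
      Real.tendsto_log_nhdsGT_zero
  have hnum : Tendsto (fun t : ℝ => -(Real.logb 2 ((2:ℝ) ^ t - 1)))
      (𝓝[Ioo (0:ℝ) 1] 0) atTop :=
    tendsto_neg_atBot_atTop.comp (hlogb.comp hX)
  have hden : Tendsto (fun t : ℝ => (2 * (1 - t))⁻¹) (𝓝[Ioo (0:ℝ) 1] 0) (𝓝 (2⁻¹)) := by
    have hc : ContinuousAt (fun t : ℝ => (2 * (1 - t))⁻¹) 0 := by
      apply ContinuousAt.inv₀
      · fun_prop
      · norm_num
    have := hc.tendsto.mono_left (nhdsWithin_le_nhds (s := Ioo (0:ℝ) 1))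
    simpa using this
  have h := hnum.atTop_mul_pos (by norm_num : (0:ℝ) < 2⁻¹) hden
  unfold gfun
  simp only [div_eq_mul_inv]
  exact h

lemma gfun_one : Tendsto gfun (𝓝[Ioo (0:ℝ) 1] 1) (𝓝 1) := by
  -- slope of log at 1
  set S : ℝ → ℝ := fun x => Real.log x / (x - 1) with hS_def
  have hS : Tendsto S (𝓝[≠] (1:ℝ)) (𝓝 1) := by
    have h := Real.hasDerivAt_log one_ne_zero
    rw [hasDerivAt_iff_tendsto_slope] at h
    have heq : slope Real.log 1 = S := by
      funext x
      simp [slope_def_field, S]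
    rw [heq] at h
    simpa using h
  have hmap : Tendsto (fun x : ℝ => (1 + x)/2) (𝓝[≠] (1:ℝ)) (𝓝[≠] (1:ℝ)) := by
    rw [tendsto_nhdsWithin_iff]
    refine ⟨?_, ?_⟩
    · have hc : ContinuousAt (fun x : ℝ => (1 + x)/2) 1 := by fun_prop
      have h1 : ((1:ℝ) + 1)/2 = 1 := by norm_num
      have := hc.tendsto.mono_left (nhdsWithin_le_nhds (s := {(1:ℝ)}ᶜ))
      rwa [h1] at this
    · filter_upwards [self_mem_nhdsWithin] with x hx
      simp only [Set.mem_compl_iff, Set.mem_singleton_iff] at hx ⊢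
      intro h
      apply hx
      linarith [h]
  have hquot : Tendsto (fun x : ℝ => S x / S ((1 + x)/2)) (𝓝[≠] (1:ℝ)) (𝓝 1) := by
    have := hS.div (hS.comp hmap) one_ne_zero
    rw [div_one] at this
    exact this
  have hx : Tendsto (fun t : ℝ => (2:ℝ) ^ t - 1) (𝓝[Ioo (0:ℝ) 1] 1) (𝓝[≠] (1:ℝ)) := by
    rw [tendsto_nhdsWithin_iff]
    refine ⟨?_, ?_⟩
    · have hc : ContinuousAt (fun t : ℝ => (2:ℝ) ^ t - 1) 1 :=
        (Real.continuousAt_const_rpow (two_ne_zero)).sub continuousAt_const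
      have h21 : (2:ℝ) ^ (1:ℝ) - 1 = 1 := by norm_num
      have := hc.tendsto.mono_left (nhdsWithin_le_nhds (s := Ioo (0:ℝ) 1))
      rwa [h21] at this
    · filter_upwards [self_mem_nhdsWithin] with t ht
      have h2 : (2:ℝ) ^ t < 2 := by
        have : (2:ℝ) ^ t < 2 ^ (1:ℝ) :=
          (Real.rpow_lt_rpow_left_iff one_lt_two).mpr ht.2
        simpa using this
      simp only [Set.mem_compl_iff, Set.mem_singleton_iff]
      intro h
      nlinarith [h]
  have hcomp : Tendsto (fun t : ℝ => S ((2:ℝ) ^ t - 1) / S ((1 + ((2:ℝ) ^ t - 1))/2))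
      (𝓝[Ioo (0:ℝ) 1] 1) (𝓝 1) := hquot.comp hx
  refine Tendsto.congr' ?_ hcomp
  filter_upwards [self_mem_nhdsWithin] with t ht
  set x : ℝ := (2:ℝ) ^ t - 1 with hx_def
  have h2x : (2:ℝ) ^ t = 1 + x := by ring
  have hx0 : 0 < x := by
    have h : (1:ℝ) < 2 ^ t :=
      (Real.one_lt_rpow_iff_of_pos two_pos).mpr (Or.inl ⟨one_lt_two, ht.1⟩)
    simp only [hx_def]
    linarith
  have hx1 : x < 1 := by
    have h : (2:ℝ) ^ t < 2 ^ (1:ℝ) :=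
      (Real.rpow_lt_rpow_left_iff one_lt_two).mpr ht.2
    rw [Real.rpow_one] at h
    simp only [hx_def]
    linarith
  have hlog : Real.log (1 + x) = t * Real.log 2 := by
    rw [← h2x, Real.log_rpow two_pos]
  have hl2 : Real.log 2 ≠ 0 := (Real.log_pos one_lt_two).ne'
  have ht' : t = Real.log (1 + x) / Real.log 2 := by
    rw [hlog]; field_simp
  have hd : Real.log ((1 + x)/2) ≠ 0 :=
    (Real.log_neg (by linarith) (by linarith)).ne
  have hld : Real.log ((1 + x)/2) = Real.log (1 + x) - Real.log 2 :=
    Real.log_div (by linarith) two_ne_zero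
  have hxm1 : x - 1 ≠ 0 := sub_ne_zero.mpr hx1.ne
  have e1 : S ((1 + x)/2) = 2 * Real.log ((1 + x)/2) / (x - 1) := by
    simp only [hS_def]
    rw [div_eq_div_iff (by intro h; apply hxm1; linarith) hxm1]
    ring
  have hLHS : S x / S ((1 + x)/2) = Real.log x / (2 * Real.log ((1 + x)/2)) := by
    rw [e1]
    simp only [hS_def]
    field_simp
  have hT : 1 - t = -(Real.log ((1 + x)/2)) / Real.log 2 := by
    rw [hld, ht']
    field_simp
    ring
  have hRHS : (-(Real.logb 2 x)) / (2 * (1 - t)) = Real.log x / (2 * Real.log ((1 + x)/2)) := by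
    rw [Real.logb, hT]
    field_simp
  show S x / S ((1 + x)/2) = gfun t
  rw [hLHS]
  unfold gfun
  rw [← hx_def, hRHS]

lemma tendsto_ratio_sub_half : Tendsto (fun p : ℝ => (1 - binEnt p)/(1 - 2*p))
    (𝓝[<] ((1:ℝ)/2)) (𝓝 0) := by
  have hder : HasDerivAt binEnt 0 (1/2) := by
    have h := Real.hasDerivAt_binEntropy (p := 1/2) (by norm_num) (by norm_num)
    have h2 := h.div_const (Real.log 2)
    have heq : binEnt = fun x => Real.binEntropy x / Real.log 2 := funext binEnt_eq
    rw [heq]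
    refine h2.congr_deriv ?_
    norm_num
  have hslope := hasDerivAt_iff_tendsto_slope.mp hder
  have hslope' : Tendsto (slope binEnt (1/2)) (𝓝[<] ((1:ℝ)/2)) (𝓝 0) :=
    hslope.mono_left (nhdsWithin_mono _ (fun y hy => ne_of_lt hy))
  have := hslope'.div_const 2
  rw [zero_div] at this
  refine Tendsto.congr' ?_ this
  filter_upwards [self_mem_nhdsWithin] with p hp
  have hp' : p - 1/2 ≠ 0 := sub_ne_zero.mpr (ne_of_lt hp)
  have hd : 1 - 2*p ≠ 0 := by
    intro h
    apply hp'
    linarith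
  rw [slope_def_field, binEnt_half, div_div,
    div_eq_div_iff (by intro h; apply hp'; linarith) hd]
  ring

/-- Comparison of the syndrome-class rate
`R(p,δp) = −(δp/(1−2p)) log₂(2^{h(p)} − 1)` with the location-encoding rate
`R₁(p,δp) = 2δp(1−h(p))/(1−2p)`: their ratio
`[−log₂(2^{h(p)}−1)] / [2(1−h(p))]` tends to `+∞` as `p → 0⁺` (so `R`
exceeds `R₁` for small `p`), tends to `1` as `p → 1/2⁻`, and both rates tend
to `0` as `p → 1/2⁻`. -/
theorem rate_comparison (δp : ℝ) (hδ : 0 < δp) :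
    Tendsto
      (fun p : ℝ =>
        (-(Real.logb 2 ((2:ℝ) ^ (binEnt p) - 1))) / (2 * (1 - binEnt p)))
      (nhdsWithin 0 (Set.Ioi 0)) atTop ∧
    Tendsto
      (fun p : ℝ =>
        (-(Real.logb 2 ((2:ℝ) ^ (binEnt p) - 1))) / (2 * (1 - binEnt p)))
      (nhdsWithin (1/2) (Set.Iio (1/2))) (nhds 1) ∧
    Tendsto
      (fun p : ℝ => -(δp/(1-2*p)) * Real.logb 2 ((2:ℝ) ^ (binEnt p) - 1))
      (nhdsWithin (1/2) (Set.Iio (1/2))) (nhds 0) ∧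
    Tendsto
      (fun p : ℝ => 2*δp*(1 - binEnt p)/(1-2*p))
      (nhdsWithin (1/2) (Set.Iio (1/2))) (nhds 0) := by
  have h1 : Tendsto
      (fun p : ℝ =>
        (-(Real.logb 2 ((2:ℝ) ^ (binEnt p) - 1))) / (2 * (1 - binEnt p)))
      (nhdsWithin 0 (Set.Ioi 0)) atTop := gfun_atTop.comp tendsto_binEnt_zero
  have h2 : Tendsto
      (fun p : ℝ =>
        (-(Real.logb 2 ((2:ℝ) ^ (binEnt p) - 1))) / (2 * (1 - binEnt p)))
      (nhdsWithin (1/2) (Set.Iio (1/2))) (nhds 1) := gfun_one.comp tendsto_binEnt_half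
  have h4 : Tendsto
      (fun p : ℝ => 2*δp*(1 - binEnt p)/(1-2*p))
      (nhdsWithin (1/2) (Set.Iio (1/2))) (nhds 0) := by
    have := tendsto_ratio_sub_half.const_mul (2*δp)
    rw [mul_zero] at this
    refine Tendsto.congr' ?_ this
    filter_upwards with p
    rw [mul_div_assoc]
  have h3 : Tendsto
      (fun p : ℝ => -(δp/(1-2*p)) * Real.logb 2 ((2:ℝ) ^ (binEnt p) - 1))
      (nhdsWithin (1/2) (Set.Iio (1/2))) (nhds 0) := by
    have hmul := h2.mul h4
    rw [one_mul] at hmul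
    refine Tendsto.congr' ?_ hmul
    filter_upwards [Ioo_mem_nhdsLT (by norm_num : (0:ℝ) < 1/2)] with p hp
    have hh : binEnt p ∈ Ioo (0:ℝ) 1 :=
      binEnt_mem hp.1 (hp.2.trans (by norm_num)) (by rw [← one_div]; exact hp.2.ne)
    have hc : 1 - binEnt p ≠ 0 := sub_ne_zero.mpr hh.2.ne'
    have hd : 1 - 2*p ≠ 0 := by
      have : p < 1/2 := hp.2
      intro h; nlinarith
    field_simp
  exact ⟨h1, h2, h3, h4⟩
end
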